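/- Let h > 0, V > 0, and let v : [0,h] → ℝ be measurable with |v(t)| ≤ V for all t. Let w be the constant w = (1/h)∫₀ʰ v(s) ds. Then ∫₀ʰ | ∫₀ᵗ v(s) ds − t·w | dt ≤ V·h²/3. -/

import Mathlib

open MeasureTheory Set

/-- For `h > 0`, `V > 0` and a measurable `v : [0,h] → ℝ` with `|v| ≤ V`,
letting `w = (1/h)∫₀ʰ v`, we have `∫₀ʰ |∫₀ᵗ v − t·w| dt ≤ V·h²/3`. -/
theorem running_integral_constant_approx_integral_bound
    (h V : ℝ) (hh : 0 < h) (hV : 0 < V)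
    (v : ℝ → ℝ) (hv : Measurable v)
    (hbound : ∀ t ∈ Icc (0 : ℝ) h, |v t| ≤ V) :
    (∫ t in (0 : ℝ)..h,
        |(∫ s in (0 : ℝ)..t, v s) - t * ((1 / h) * ∫ s in (0 : ℝ)..h, v s)|)
      ≤ V * h ^ 2 / 3 := by
  -- integrability of v on [0,h]
  have hIntOn : IntegrableOn v (Icc (0 : ℝ) h) := by
    refine Integrable.mono' (g := fun _ => V) (integrableOn_const measure_Icc_lt_top.ne)
      hv.aestronglyMeasurable ?_
    filter_upwards [ae_restrict_mem measurableSet_Icc] with t ht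
    simpa using hbound t ht
  have hInt : ∀ a b : ℝ, a ∈ Icc (0:ℝ) h → b ∈ Icc (0:ℝ) h →
      IntervalIntegrable v volume a b := by
    intro a b ha hb
    refine (hIntOn.mono_set ?_).intervalIntegrable
    exact uIcc_subset_Icc ha hb
  -- bounds on partial integrals
  have habs1 : ∀ t ∈ Icc (0:ℝ) h, |∫ s in (0:ℝ)..t, v s| ≤ V * t := by
    intro t ht
    have := intervalIntegral.norm_integral_le_of_norm_le_const
      (C := V) (f := v) (a := (0:ℝ)) (b := t) ?_
    · simpa [abs_of_nonneg ht.1, mul_comm] using this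
    · intro x hx
      rw [uIoc_of_le ht.1] at hx
      exact hbound x ⟨le_of_lt hx.1, hx.2.trans ht.2⟩
  have habs2 : ∀ t ∈ Icc (0:ℝ) h, |∫ s in t..h, v s| ≤ V * (h - t) := by
    intro t ht
    have := intervalIntegral.norm_integral_le_of_norm_le_const
      (C := V) (f := v) (a := t) (b := h) ?_
    · simpa [abs_of_nonneg (sub_nonneg.2 ht.2), mul_comm] using this
    · intro x hx
      rw [uIoc_of_le ht.2] at hx
      exact hbound x ⟨ht.1.trans (le_of_lt hx.1), hx.2⟩
  -- pointwise bound
  have hpt : ∀ t ∈ Icc (0:ℝ) h,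
      |(∫ s in (0 : ℝ)..t, v s) - t * ((1 / h) * ∫ s in (0 : ℝ)..h, v s)|
        ≤ 2 * V / h * (t * (h - t)) := by
    intro t ht
    have hsplit : (∫ s in (0:ℝ)..h, v s) = (∫ s in (0:ℝ)..t, v s) + ∫ s in t..h, v s :=
      (intervalIntegral.integral_add_adjacent_intervals
        (hInt 0 t (left_mem_Icc.2 hh.le) ht) (hInt t h ht (right_mem_Icc.2 hh.le))).symm
    have hrw : (∫ s in (0 : ℝ)..t, v s) - t * ((1 / h) * ∫ s in (0 : ℝ)..h, v s)
        = (1 - t / h) * (∫ s in (0:ℝ)..t, v s) - (t / h) * ∫ s in t..h, v s := by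
      rw [hsplit]; field_simp; ring
    rw [hrw]
    have h1 : (0:ℝ) ≤ 1 - t / h := by
      have : t / h ≤ 1 := (div_le_one hh).2 ht.2
      linarith
    have h2 : (0:ℝ) ≤ t / h := div_nonneg ht.1 hh.le
    calc |(1 - t / h) * (∫ s in (0:ℝ)..t, v s) - (t / h) * ∫ s in t..h, v s|
        ≤ |(1 - t / h) * (∫ s in (0:ℝ)..t, v s)| + |(t / h) * ∫ s in t..h, v s| :=
          abs_sub _ _
      _ ≤ (1 - t / h) * (V * t) + (t / h) * (V * (h - t)) := by
          rw [abs_mul, abs_mul, abs_of_nonneg h1, abs_of_nonneg h2]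
          exact add_le_add (mul_le_mul_of_nonneg_left (habs1 t ht) h1)
            (mul_le_mul_of_nonneg_left (habs2 t ht) h2)
      _ = 2 * V / h * (t * (h - t)) := by field_simp; ring
  -- integrability of LHS integrand: it's continuous on [0,h]
  have hIntOn' : IntegrableOn v (uIcc (0:ℝ) h) := by
    rwa [uIcc_of_le hh.le]
  have hc1 : ContinuousOn (fun t => ∫ s in (0:ℝ)..t, v s) (Icc (0:ℝ) h) := by
    have := intervalIntegral.continuousOn_primitive_interval hIntOn'
    rwa [uIcc_of_le hh.le] at this
  have hc2 : ContinuousOn (fun t : ℝ => t * ((1 / h) * ∫ s in (0 : ℝ)..h, v s))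
      (Icc (0:ℝ) h) := (continuousOn_id.mul continuousOn_const)
  have hcont : ContinuousOn (fun t =>
      |(∫ s in (0 : ℝ)..t, v s) - t * ((1 / h) * ∫ s in (0 : ℝ)..h, v s)|)
      (Icc (0:ℝ) h) := (hc1.sub hc2).abs
  have hLHSint : IntervalIntegrable (fun t =>
      |(∫ s in (0 : ℝ)..t, v s) - t * ((1 / h) * ∫ s in (0 : ℝ)..h, v s)|)
      volume 0 h := by
    apply ContinuousOn.intervalIntegrable
    simpa [uIcc_of_le hh.le] using hcont
  have hRHSint : IntervalIntegrable (fun t => 2 * V / h * (t * (h - t))) volume 0 h :=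
    (Continuous.intervalIntegrable (by fun_prop) _ _)
  have hmono := intervalIntegral.integral_mono_on hh.le hLHSint hRHSint hpt
  refine hmono.trans ?_
  have : (∫ t in (0:ℝ)..h, 2 * V / h * (t * (h - t))) = V * h ^ 2 / 3 := by
    have : (∫ t in (0:ℝ)..h, 2 * V / h * (t * (h - t)))
        = 2 * V / h * ∫ t in (0:ℝ)..h, (t * h - t ^ 2) := by
      rw [← intervalIntegral.integral_const_mul]
      congr 1; funext t; ring
    rw [this, intervalIntegral.integral_sub
      ((continuous_id'.intervalIntegrable _ _).mul_const h)
      ((continuous_pow 2).intervalIntegrable _ _)]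
    simp [intervalIntegral.integral_mul_const, integral_id, integral_pow]
    field_simp; ring
  rw [this]
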